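/- Let A be a Hermitian matrix and B a positive semidefinite Hermitian matrix on a finite-dimensional complex inner product space, and let E < min spec(A). Then the number of eigenvalues of A − B below E equals the number of eigenvalues of the matrix B^{1/2}(A−E)^{-1}B^{1/2} that are greater than 1. -/

import Mathlib

open scoped Classical ComplexOrder

namespace Matrix.PosSemidef

/-- The positive square root of a positive semidefinite matrix, with the definition it had in
Mathlib (December 2024), where it has since been removed in favour of `CFC.sqrt`. -/
noncomputable def sqrt {n : Type*} {𝕜 : Type*} [Fintype n] [DecidableEq n] [RCLike 𝕜]
    {A : Matrix n n 𝕜} (hA : A.PosSemidef) : Matrix n n 𝕜 :=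
  hA.1.eigenvectorUnitary.1 * Matrix.diagonal ((↑) ∘ (√·) ∘ hA.1.eigenvalues) *
    (star hA.1.eigenvectorUnitary : Matrix n n 𝕜)

lemma posSemidef_sqrt {n : Type*} [Fintype n] [DecidableEq n]
    {A : Matrix n n ℂ} (hA : A.PosSemidef) : PosSemidef hA.sqrt := by
  have hd : (Matrix.diagonal ((↑) ∘ (√·) ∘ hA.1.eigenvalues : n → ℂ)).PosSemidef := by
    rw [posSemidef_diagonal_iff]
    intro i
    simp [Function.comp, Complex.zero_le_real, Real.sqrt_nonneg]
  have := hd.mul_mul_conjTranspose_same (hA.1.eigenvectorUnitary : Matrix n n ℂ)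
  exact this

lemma sqrt_mul_self {n : Type*} [Fintype n] [DecidableEq n]
    {A : Matrix n n ℂ} (hA : A.PosSemidef) : hA.sqrt * hA.sqrt = A := by
  have hU : star (hA.1.eigenvectorUnitary : Matrix n n ℂ) * hA.1.eigenvectorUnitary = 1 :=
    Unitary.coe_star_mul_self _
  have hD : Matrix.diagonal ((↑) ∘ (√·) ∘ hA.1.eigenvalues : n → ℂ) *
      Matrix.diagonal ((↑) ∘ (√·) ∘ hA.1.eigenvalues : n → ℂ)
      = Matrix.diagonal ((↑) ∘ hA.1.eigenvalues : n → ℂ) := by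
    rw [Matrix.diagonal_mul_diagonal]
    congr 1
    funext i
    simp only [Function.comp_apply]
    rw [← Complex.ofReal_mul, Real.mul_self_sqrt (hA.eigenvalues_nonneg i)]
  unfold sqrt
  conv_rhs => rw [hA.1.spectral_theorem]
  rw [Unitary.conjStarAlgAut_apply]
  simp only [Matrix.mul_assoc]
  rw [← Matrix.mul_assoc (star _) _, hU, Matrix.one_mul]
  congr 1
  rw [← Matrix.mul_assoc]
  congr 1

end Matrix.PosSemidef

open scoped ComplexInnerProductSpace
open Finset Module Matrix

namespace BS
variable {n : Type*} [Fintype n] [DecidableEq n]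

noncomputable abbrev TT (M : Matrix n n ℂ) : EuclideanSpace ℂ n →ₗ[ℂ] EuclideanSpace ℂ n :=
  Matrix.toEuclideanLin M

lemma TT_mul (M N : Matrix n n ℂ) (x : EuclideanSpace ℂ n) :
    TT (M * N) x = TT M (TT N x) := by
  simp [Matrix.toEuclideanLin_apply, Matrix.mulVec_mulVec]

lemma TT_one (x : EuclideanSpace ℂ n) : TT 1 x = x := by
  simp [Matrix.toEuclideanLin_apply]

lemma inner_TT_left (C : Matrix n n ℂ) (x y : EuclideanSpace ℂ n) :
    ⟪x, TT C y⟫ = ⟪TT Cᴴ x, y⟫ := by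
  rw [show TT Cᴴ = Matrix.toEuclideanLin Cᴴ from rfl,
    Matrix.toEuclideanLin_conjTranspose_eq_adjoint, LinearMap.adjoint_inner_left]

lemma TT_sub (M N : Matrix n n ℂ) (x : EuclideanSpace ℂ n) :
    TT (M - N) x = TT M x - TT N x := by
  ext j
  simp [Matrix.toEuclideanLin_apply, Matrix.sub_mulVec]

lemma TT_add (M N : Matrix n n ℂ) (x : EuclideanSpace ℂ n) :
    TT (M + N) x = TT M x + TT N x := by
  ext j
  simp [Matrix.toEuclideanLin_apply, Matrix.add_mulVec]

lemma TT_smul_one (c : ℂ) (x : EuclideanSpace ℂ n) :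
    TT (c • (1 : Matrix n n ℂ)) x = c • x := by
  ext j
  simp [Matrix.toEuclideanLin_apply, Matrix.smul_mulVec]

lemma TT_eigen {M : Matrix n n ℂ} (hM : M.IsHermitian) (i : n) :
    TT M (hM.eigenvectorBasis i) = (hM.eigenvalues i : ℂ) • hM.eigenvectorBasis i := by
  have h := hM.mulVec_eigenvectorBasis i
  ext j
  have := congrFun h j
  simpa [Matrix.toEuclideanLin_apply, Complex.real_smul] using this

lemma form_eq_sum {M : Matrix n n ℂ} (hM : M.IsHermitian) (x : EuclideanSpace ℂ n) :
    (⟪x, TT M x⟫).re = ∑ i, hM.eigenvalues i * ‖⟪hM.eigenvectorBasis i, x⟫‖ ^ 2 := by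
  set b := hM.eigenvectorBasis
  have hsym := (Matrix.isHermitian_iff_isSymmetric).1 hM
  have key : ⟪x, TT M x⟫ = ∑ i, ((hM.eigenvalues i * ‖⟪b i, x⟫‖ ^ 2 : ℝ) : ℂ) := by
    rw [← b.sum_inner_mul_inner x (TT M x)]
    refine Finset.sum_congr rfl fun i _ => ?_
    have h1 : ⟪b i, TT M x⟫ = (hM.eigenvalues i : ℂ) * ⟪b i, x⟫ := by
      have := hsym (b i) x
      rw [← this, TT_eigen hM i, inner_smul_left]
      simp [Complex.conj_ofReal, b]
    rw [h1, ← inner_conj_symm x (b i)]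
    rw [show (starRingEnd ℂ) ⟪b i, x⟫ * ((hM.eigenvalues i : ℂ) * ⟪b i, x⟫)
      = (hM.eigenvalues i : ℂ) * ((starRingEnd ℂ) ⟪b i, x⟫ * ⟪b i, x⟫) by ring]
    rw [mul_comm ((starRingEnd ℂ) _) _, Complex.mul_conj, ← Complex.ofReal_mul]
    congr 1
    simp [Complex.normSq_eq_norm_sq]
  rw [key]
  rw [Complex.re_sum]
  exact Finset.sum_congr rfl fun i _ => by rw [Complex.ofReal_re]

lemma norm_eq_sum (b : OrthonormalBasis n ℂ (EuclideanSpace ℂ n)) (x : EuclideanSpace ℂ n) :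
    (⟪x, x⟫).re = ∑ i, ‖⟪b i, x⟫‖ ^ 2 := by
  have key : ⟪x, x⟫ = ∑ i, ((‖⟪b i, x⟫‖ ^ 2 : ℝ) : ℂ) := by
    rw [← b.sum_inner_mul_inner x x]
    refine Finset.sum_congr rfl fun i _ => ?_
    rw [← inner_conj_symm x (b i), RCLike.conj_mul]
    norm_cast
  rw [key, Complex.re_sum]
  exact Finset.sum_congr rfl fun i _ => by rw [Complex.ofReal_re]

lemma exists_coord_ne {x : EuclideanSpace ℂ n}
    (b : OrthonormalBasis n ℂ (EuclideanSpace ℂ n)) (hx : x ≠ 0) :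
    ∃ i, ⟪b i, x⟫ ≠ 0 := by
  by_contra h
  push_neg at h
  have : (⟪x, x⟫ : ℂ).re = 0 := by
    rw [norm_eq_sum b]
    exact Finset.sum_eq_zero fun i _ => by rw [h i]; simp
  have h0 : (⟪x, x⟫ : ℂ) = 0 := by
    rw [← inner_self_ofReal_re x, RCLike.re_to_complex, this]
    simp
  exact hx (inner_self_eq_zero.mp h0)

lemma coords_vanish (b : OrthonormalBasis n ℂ (EuclideanSpace ℂ n)) (s : Finset n)
    {x : EuclideanSpace ℂ n} (hx : x ∈ Submodule.span ℂ (b '' ↑s)) :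
    ∀ i ∉ s, ⟪b i, x⟫ = 0 := by
  induction hx using Submodule.span_induction with
  | mem y hy => ?_
  | zero => intro i _; simp
  | add y z _ _ hy hz => intro i hi; rw [inner_add_right, hy i hi, hz i hi, add_zero]
  | smul c y _ hy => intro i hi; rw [inner_smul_right, hy i hi, mul_zero]
  · obtain ⟨j, hj, rfl⟩ := hy
    intro i hi
    have : i ≠ j := fun h => hi (h ▸ hj)
    exact b.orthonormal.2 this

lemma finrank_span_basis_image (b : OrthonormalBasis n ℂ (EuclideanSpace ℂ n)) (s : Finset n) :
    finrank ℂ (Submodule.span ℂ (b '' ↑s)) = s.card := by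
  have hinj : Function.Injective b := b.orthonormal.linearIndependent.injective
  have h1 : (↑(s.image b) : Set (EuclideanSpace ℂ n)) = b '' ↑s := Finset.coe_image
  have hsub : (↑(s.image b) : Set (EuclideanSpace ℂ n)) ⊆ Set.range b := by
    rw [Finset.coe_image]; exact Set.image_subset_range _ _
  have hli := ((linearIndepOn_id_range_iff hinj).mpr b.orthonormal.linearIndependent).mono hsub
  rw [← h1, finrank_span_finset_eq_card hli, Finset.card_image_of_injective _ hinj]

lemma inner_re_nonneg (x : EuclideanSpace ℂ n) : 0 ≤ (⟪x, x⟫).re := by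
  have := inner_self_nonneg (𝕜 := ℂ) (x := x)
  simpa using this

lemma inner_re_pos {x : EuclideanSpace ℂ n} (hx : x ≠ 0) : 0 < (⟪x, x⟫).re := by
  rcases lt_or_eq_of_le (inner_re_nonneg x) with h | h
  · exact h
  · exfalso
    apply hx
    have h0 : (⟪x, x⟫ : ℂ) = 0 := by
      rw [← inner_self_ofReal_re x, RCLike.re_to_complex, ← h]
      simp
    exact inner_self_eq_zero.mp h0

/-- Upper bound: any subspace on which the quadratic form is `< t` has dimension at most
the number of eigenvalues `< t`. -/
lemma card_ge_of_lt {M : Matrix n n ℂ} (hM : M.IsHermitian) (t : ℝ)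
    (W : Submodule ℂ (EuclideanSpace ℂ n))
    (hW : ∀ x ∈ W, x ≠ 0 → (⟪x, TT M x⟫).re < t * (⟪x, x⟫).re) :
    finrank ℂ W ≤ (Finset.univ.filter fun i => hM.eigenvalues i < t).card := by
  set b := hM.eigenvectorBasis with hb
  set S : Finset n := Finset.univ.filter fun i => hM.eigenvalues i < t with hS
  set V : Submodule ℂ (EuclideanSpace ℂ n) := Submodule.span ℂ (b '' ↑(Sᶜ)) with hV
  have hVrank : finrank ℂ V = Sᶜ.card := finrank_span_basis_image b Sᶜ
  have hdisj : W ⊓ V = ⊥ := by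
    rw [Submodule.eq_bot_iff]
    rintro x ⟨hxW, hxV⟩
    by_contra hx
    have hvan : ∀ i ∈ S, ⟪b i, x⟫ = 0 := by
      intro i hi
      exact coords_vanish b Sᶜ hxV i (by simpa using hi)
    have hge : t * (⟪x, x⟫).re ≤ (⟪x, TT M x⟫).re := by
      rw [form_eq_sum hM x, norm_eq_sum b x, Finset.mul_sum]
      apply Finset.sum_le_sum
      intro i _
      by_cases hiS : i ∈ S
      · rw [hvan i hiS]; simp
      · have : t ≤ hM.eigenvalues i := by
          simp only [hS, Finset.mem_filter, Finset.mem_univ, true_and] at hiS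
          linarith [not_lt.mp hiS]
        exact mul_le_mul_of_nonneg_right this (sq_nonneg _)
    exact absurd (hW x hxW hx) (not_lt.mpr hge)
  have hsum := Submodule.finrank_sup_add_finrank_inf_eq W V
  rw [hdisj] at hsum
  simp only [finrank_bot, add_zero] at hsum
  have hle : finrank ℂ ↥(W ⊔ V) ≤ Fintype.card n := by
    simpa [finrank_euclideanSpace] using Submodule.finrank_le (W ⊔ V)
  rw [hVrank] at hsum
  have h2 : finrank ℂ ↥W + Sᶜ.card ≤ Fintype.card n := by rw [← hsum]; exact hle
  have h3 : Sᶜ.card = Fintype.card n - S.card := Finset.card_compl S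
  have h4 := Finset.card_le_univ S
  omega

/-- Witness: a subspace of dimension = number of eigenvalues `< t` on which the form is `< t`. -/
lemma exists_subspace_lt {M : Matrix n n ℂ} (hM : M.IsHermitian) (t : ℝ) :
    ∃ W : Submodule ℂ (EuclideanSpace ℂ n),
      (∀ x ∈ W, x ≠ 0 → (⟪x, TT M x⟫).re < t * (⟪x, x⟫).re) ∧
      finrank ℂ W = (Finset.univ.filter fun i => hM.eigenvalues i < t).card := by
  set b := hM.eigenvectorBasis with hb
  set S : Finset n := Finset.univ.filter (fun i => hM.eigenvalues i < t) with hS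
  refine ⟨Submodule.span ℂ (b '' ↑S), ?_, finrank_span_basis_image b S⟩
  intro x hx hx0
  have hvan : ∀ i ∉ S, ⟪b i, x⟫ = 0 := coords_vanish b S hx
  rw [form_eq_sum hM x, norm_eq_sum b x, Finset.mul_sum]
  apply Finset.sum_lt_sum
  · intro i _
    by_cases hiS : i ∈ S
    · have hlt : hM.eigenvalues i < t := by
        simp only [hS, Finset.mem_filter, Finset.mem_univ, true_and] at hiS
        exact hiS
      exact mul_le_mul_of_nonneg_right hlt.le (sq_nonneg _)
    · rw [hvan i hiS]; simp
  · obtain ⟨i, hi⟩ := exists_coord_ne b hx0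
    have hiS : i ∈ S := by by_contra h; exact hi (hvan i h)
    refine ⟨i, Finset.mem_univ i, ?_⟩
    have ht : hM.eigenvalues i < t := by
      simp only [hS, Finset.mem_filter, Finset.mem_univ, true_and] at hiS
      exact hiS
    exact mul_lt_mul_of_pos_right ht (pow_pos (norm_pos_iff.mpr hi) 2)

lemma card_ge_of_gt {M : Matrix n n ℂ} (hM : M.IsHermitian) (t : ℝ)
    (W : Submodule ℂ (EuclideanSpace ℂ n))
    (hW : ∀ x ∈ W, x ≠ 0 → t * (⟪x, x⟫).re < (⟪x, TT M x⟫).re) :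
    finrank ℂ W ≤ (Finset.univ.filter fun i => t < hM.eigenvalues i).card := by
  set b := hM.eigenvectorBasis with hb
  set S : Finset n := Finset.univ.filter (fun i => t < hM.eigenvalues i) with hS
  set V : Submodule ℂ (EuclideanSpace ℂ n) := Submodule.span ℂ (b '' ↑(Sᶜ)) with hV
  have hVrank : finrank ℂ V = Sᶜ.card := finrank_span_basis_image b Sᶜ
  have hdisj : W ⊓ V = ⊥ := by
    rw [Submodule.eq_bot_iff]
    rintro x ⟨hxW, hxV⟩
    by_contra hx
    have hvan : ∀ i ∈ S, ⟪b i, x⟫ = 0 := fun i hi =>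
      coords_vanish b Sᶜ hxV i (by simpa using hi)
    have hge : (⟪x, TT M x⟫).re ≤ t * (⟪x, x⟫).re := by
      rw [form_eq_sum hM x, norm_eq_sum b x, Finset.mul_sum]
      apply Finset.sum_le_sum
      intro i _
      by_cases hiS : i ∈ S
      · rw [hvan i hiS]; simp
      · have : hM.eigenvalues i ≤ t := by
          simp only [hS, Finset.mem_filter, Finset.mem_univ, true_and] at hiS
          linarith [not_lt.mp hiS]
        exact mul_le_mul_of_nonneg_right this (sq_nonneg _)
    exact absurd (hW x hxW hx) (not_lt.mpr hge)
  have hsum := Submodule.finrank_sup_add_finrank_inf_eq W V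
  rw [hdisj] at hsum
  simp only [finrank_bot, add_zero] at hsum
  have hle : finrank ℂ ↥(W ⊔ V) ≤ Fintype.card n := by
    simpa [finrank_euclideanSpace] using Submodule.finrank_le (W ⊔ V)
  rw [hVrank] at hsum
  have h2 : finrank ℂ ↥W + Sᶜ.card ≤ Fintype.card n := by rw [← hsum]; exact hle
  have h3 : Sᶜ.card = Fintype.card n - S.card := Finset.card_compl S
  have h4 := Finset.card_le_univ S
  omega

lemma exists_subspace_gt {M : Matrix n n ℂ} (hM : M.IsHermitian) (t : ℝ) :
    ∃ W : Submodule ℂ (EuclideanSpace ℂ n),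
      (∀ x ∈ W, x ≠ 0 → t * (⟪x, x⟫).re < (⟪x, TT M x⟫).re) ∧
      finrank ℂ W = (Finset.univ.filter fun i => t < hM.eigenvalues i).card := by
  set b := hM.eigenvectorBasis with hb
  set S : Finset n := Finset.univ.filter (fun i => t < hM.eigenvalues i) with hS
  refine ⟨Submodule.span ℂ (b '' ↑S), ?_, finrank_span_basis_image b S⟩
  intro x hx hx0
  have hvan : ∀ i ∉ S, ⟪b i, x⟫ = 0 := coords_vanish b S hx
  rw [form_eq_sum hM x, norm_eq_sum b x, Finset.mul_sum]
  apply Finset.sum_lt_sum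
  · intro i _
    by_cases hiS : i ∈ S
    · have hlt : t < hM.eigenvalues i := by
        simp only [hS, Finset.mem_filter, Finset.mem_univ, true_and] at hiS
        exact hiS
      exact mul_le_mul_of_nonneg_right hlt.le (sq_nonneg _)
    · rw [hvan i hiS]; simp
  · obtain ⟨i, hi⟩ := exists_coord_ne b hx0
    have hiS : i ∈ S := by by_contra h; exact hi (hvan i h)
    refine ⟨i, Finset.mem_univ i, ?_⟩
    have ht : t < hM.eigenvalues i := by
      simp only [hS, Finset.mem_filter, Finset.mem_univ, true_and] at hiS
      exact hiS
    exact mul_lt_mul_of_pos_right ht (pow_pos (norm_pos_iff.mpr hi) 2)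

lemma re_inner_self (x : EuclideanSpace ℂ n) : (⟪x, x⟫).re = ‖x‖ ^ 2 := by
  have := inner_self_eq_norm_sq (𝕜 := ℂ) (x := x)
  simpa using this

lemma finrank_map_eq' (f : EuclideanSpace ℂ n →ₗ[ℂ] EuclideanSpace ℂ n)
    (W : Submodule ℂ (EuclideanSpace ℂ n)) (h : ∀ x ∈ W, f x = 0 → x = 0) :
    finrank ℂ (W.map f) = finrank ℂ W := by
  have hker : LinearMap.ker (f.domRestrict W) = ⊥ := by
    refine (Submodule.eq_bot_iff _).mpr fun z hz => ?_
    have hz' : f z.1 = 0 := hz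
    exact Subtype.ext (h z.1 z.2 hz')
  have hinj : Function.Injective (f.domRestrict W) := LinearMap.ker_eq_bot.mp hker
  rw [← LinearMap.range_domRestrict]
  exact LinearMap.finrank_range_of_inj hinj

lemma cs_step (C : Matrix n n ℂ) (y : EuclideanSpace ℂ n)
    (h : (⟪y, y⟫).re < (⟪TT C y, TT C y⟫).re) :
    (⟪TT C y, TT C y⟫).re < (⟪TT Cᴴ (TT C y), TT Cᴴ (TT C y)⟫).re := by
  set z := TT C y with hz
  set w := TT Cᴴ z with hw
  rw [re_inner_self, re_inner_self] at h
  rw [re_inner_self, re_inner_self]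
  have hz0 : 0 < ‖z‖ := by nlinarith [norm_nonneg z, norm_nonneg y]
  have hyz : ‖y‖ < ‖z‖ := by nlinarith [norm_nonneg z, norm_nonneg y]
  have key : ‖z‖ ^ 2 ≤ ‖w‖ * ‖y‖ := by
    have h1 : (⟪z, z⟫).re = (⟪w, y⟫).re := by
      have h2 : ⟪z, TT C y⟫ = ⟪TT Cᴴ z, y⟫ := inner_TT_left C z y
      rw [show (⟪z, z⟫ : ℂ) = ⟪z, TT C y⟫ from rfl, h2, hw]
    have h3 : (⟪w, y⟫).re ≤ ‖w‖ * ‖y‖ := by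
      have := re_inner_le_norm (𝕜 := ℂ) w y
      simpa using this
    calc ‖z‖ ^ 2 = (⟪z, z⟫).re := (re_inner_self z).symm
    _ = (⟪w, y⟫).re := h1
    _ ≤ ‖w‖ * ‖y‖ := h3
  have hw0 : 0 < ‖w‖ := by nlinarith [norm_nonneg w, norm_nonneg y]
  nlinarith [norm_nonneg y]

lemma dot_eq_inner (M : Matrix n n ℂ) (x : n → ℂ) :
    star x ⬝ᵥ M *ᵥ x =
      ⟪(WithLp.equiv 2 (n → ℂ)).symm x, TT M ((WithLp.equiv 2 (n → ℂ)).symm x)⟫ := by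
  rw [show TT M ((WithLp.equiv 2 (n → ℂ)).symm x)
    = (WithLp.equiv 2 (n → ℂ)).symm (M *ᵥ x) from rfl]
  rw [EuclideanSpace.inner_eq_star_dotProduct]
  exact dotProduct_comm _ _

end BS

open BS Module Matrix Finset
open scoped ComplexInnerProductSpace


/-- The Birman–Schwinger principle in finite dimensions: for `A` Hermitian,
`B ≥ 0`, and `E` below the bottom of the spectrum of `A`, the number of
eigenvalues of `A − B` below `E` equals the number of eigenvalues of the
Birman–Schwinger operator `B^{1/2} (A−E)⁻¹ B^{1/2}` greater than `1`. -/
theorem birman_schwinger_finite_dim {n : Type*} [Fintype n] [DecidableEq n]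
    (A B : Matrix n n ℂ) (hA : A.IsHermitian) (hB : B.PosSemidef)
    (E : ℝ) (hE : ∀ i, E < hA.eigenvalues i)
    (hAB : (A - B).IsHermitian)
    (hK : (hB.sqrt * (A - E • 1)⁻¹ * hB.sqrt).IsHermitian) :
    (Finset.univ.filter fun i => hAB.eigenvalues i < E).card
      = (Finset.univ.filter fun i => 1 < hK.eigenvalues i).card := by
  classical
  have hE1 : (E • (1 : Matrix n n ℂ)) = (E : ℂ) • 1 := by
    ext i j
    simp [Complex.real_smul]
  have hPherm : (A - E • (1 : Matrix n n ℂ)).IsHermitian := by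
    show (A - E • (1 : Matrix n n ℂ))ᴴ = _
    rw [hE1, Matrix.conjTranspose_sub, Matrix.conjTranspose_smul, Matrix.conjTranspose_one, hA.eq]
    simp [Complex.conj_ofReal]
  have hTTP : ∀ x : EuclideanSpace ℂ n,
      TT (A - E • (1 : Matrix n n ℂ)) x = TT A x - (E : ℂ) • x := by
    intro x
    rw [hE1, TT_sub, TT_smul_one]
  have hform : ∀ x : EuclideanSpace ℂ n,
      (⟪x, TT (A - E • (1 : Matrix n n ℂ)) x⟫).re
        = (⟪x, TT A x⟫).re - E * (⟪x, x⟫).re := by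
    intro x
    rw [hTTP x, inner_sub_right, inner_smul_right]
    simp only [Complex.sub_re, Complex.mul_re, Complex.ofReal_re, Complex.ofReal_im]
    ring
  have hQA : ∀ x : EuclideanSpace ℂ n, x ≠ 0 → E * (⟪x, x⟫).re < (⟪x, TT A x⟫).re := by
    intro x hx
    rw [form_eq_sum hA x, norm_eq_sum hA.eigenvectorBasis x, Finset.mul_sum]
    apply Finset.sum_lt_sum
    · exact fun i _ => mul_le_mul_of_nonneg_right (hE i).le (sq_nonneg _)
    · obtain ⟨i, hi⟩ := exists_coord_ne hA.eigenvectorBasis hx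
      exact ⟨i, Finset.mem_univ i,
        mul_lt_mul_of_pos_right (hE i) (pow_pos (norm_pos_iff.mpr hi) 2)⟩
  have hP : (A - E • (1 : Matrix n n ℂ)).PosDef := by
    refine Matrix.PosDef.of_dotProduct_mulVec_pos hPherm fun x hx => ?_
    have hx' : (WithLp.equiv 2 (n → ℂ)).symm x ≠ 0 := by
      intro h
      apply hx
      have := congrArg (WithLp.equiv 2 (n → ℂ)) h
      simpa using this
    have hre : 0 < (star x ⬝ᵥ (A - E • (1 : Matrix n n ℂ)) *ᵥ x).re := by
      rw [dot_eq_inner, hform]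
      linarith [hQA _ hx']
    have hconj : (starRingEnd ℂ) (star x ⬝ᵥ (A - E • (1 : Matrix n n ℂ)) *ᵥ x)
        = star x ⬝ᵥ (A - E • (1 : Matrix n n ℂ)) *ᵥ x := by
      conv_lhs => rw [Matrix.star_dotProduct]
      rw [starRingEnd_apply, star_star, Matrix.star_mulVec, ← Matrix.dotProduct_mulVec,
        hPherm.eq]
    have him : (star x ⬝ᵥ (A - E • (1 : Matrix n n ℂ)) *ᵥ x).im = 0 :=
      Complex.conj_eq_iff_im.mp hconj
    rw [Complex.lt_def]
    exact ⟨by simpa using hre, by simp [him]⟩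
  set S : Matrix n n ℂ := hP.posSemidef.sqrt with hSdef
  have hSS : S * S = A - E • (1 : Matrix n n ℂ) := hP.posSemidef.sqrt_mul_self
  have hSherm : S.IsHermitian := hP.posSemidef.posSemidef_sqrt.1
  have hdet : IsUnit S.det := by
    have h1 : S.det * S.det = (A - E • (1 : Matrix n n ℂ)).det := by
      rw [← Matrix.det_mul, hSS]
    refine isUnit_iff_ne_zero.mpr fun h0 => ?_
    rw [h0, mul_zero] at h1
    exact hP.det_pos.ne' h1.symm
  have hS1 : S⁻¹ * S = 1 := Matrix.nonsing_inv_mul S hdet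
  have hS2 : S * S⁻¹ = 1 := Matrix.mul_nonsing_inv S hdet
  have hSinvherm : S⁻¹ᴴ = S⁻¹ := by rw [Matrix.conjTranspose_nonsing_inv, hSherm.eq]
  set R : Matrix n n ℂ := hB.sqrt with hRdef
  have hRherm : R.IsHermitian := hB.posSemidef_sqrt.1
  have hRR : R * R = B := hB.sqrt_mul_self
  set Y : Matrix n n ℂ := R * S⁻¹ with hYdef
  have hYH : Yᴴ = S⁻¹ * R := by rw [hYdef, Matrix.conjTranspose_mul, hSinvherm, hRherm.eq]
  have hKeq : R * (A - E • (1 : Matrix n n ℂ))⁻¹ * R = Y * Yᴴ := by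
    rw [hYH, hYdef, ← hSS, Matrix.mul_inv_rev]
    simp [Matrix.mul_assoc]
  have hYS : Y * S = R := by rw [hYdef, Matrix.mul_assoc, hS1, Matrix.mul_one]
  -- the key pointwise equivalence
  have e1 : ∀ x : EuclideanSpace ℂ n, (⟪x, TT (S * S) x⟫ : ℂ) = ⟪TT S x, TT S x⟫ := by
    intro x
    rw [TT_mul, inner_TT_left S x (TT S x), hSherm.eq]
  have e2 : ∀ x : EuclideanSpace ℂ n, (⟪x, TT (R * R) x⟫ : ℂ) = ⟪TT R x, TT R x⟫ := by
    intro x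
    rw [TT_mul, inner_TT_left R x (TT R x), hRherm.eq]
  have hABsplit : A - B = S * S - R * R + (E : ℂ) • 1 := by
    rw [hSS, hRR, ← hE1]
    abel
  have hcond : ∀ x : EuclideanSpace ℂ n,
      ((⟪x, TT (A - B) x⟫).re < E * (⟪x, x⟫).re ↔
        (⟪TT S x, TT S x⟫).re < (⟪TT Y (TT S x), TT Y (TT S x)⟫).re) := by
    intro x
    have h1 : TT (A - B) x = TT (S * S) x - TT (R * R) x + (E : ℂ) • x := by
      conv_lhs => rw [hABsplit]
      rw [TT_add, TT_sub, TT_smul_one]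
    have h2 : (⟪x, TT (A - B) x⟫).re
        = (⟪TT S x, TT S x⟫).re - (⟪TT R x, TT R x⟫).re + E * (⟪x, x⟫).re := by
      rw [h1, inner_add_right, inner_sub_right, e1, e2, inner_smul_right]
      simp only [Complex.add_re, Complex.sub_re, Complex.mul_re, Complex.ofReal_re,
        Complex.ofReal_im]
      ring
    have h3 : TT R x = TT Y (TT S x) := by rw [← TT_mul, hYS]
    rw [h2, h3]
    constructor <;> intro h <;> linarith
  have hTSinj : ∀ x : EuclideanSpace ℂ n, TT S x = 0 → x = 0 := by
    intro x h
    have h2 : x = TT S⁻¹ (TT S x) := by rw [← TT_mul, hS1, TT_one]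
    rw [h, map_zero] at h2
    exact h2
  have hTSinvinj : ∀ x : EuclideanSpace ℂ n, TT S⁻¹ x = 0 → x = 0 := by
    intro x h
    have h2 : x = TT S (TT S⁻¹ x) := by rw [← TT_mul, hS2, TT_one]
    rw [h, map_zero] at h2
    exact h2
  have hKz : ∀ z : EuclideanSpace ℂ n,
      (⟪z, TT (R * (A - E • (1 : Matrix n n ℂ))⁻¹ * R) z⟫ : ℂ)
        = ⟪TT Yᴴ z, TT Yᴴ z⟫ := by
    intro z
    rw [hKeq, TT_mul, inner_TT_left Y z (TT Yᴴ z)]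
  -- direction 1 : LHS ≤ RHS
  have hle1 : (Finset.univ.filter fun i => hAB.eigenvalues i < E).card
      ≤ (Finset.univ.filter fun i => 1 < hK.eigenvalues i).card := by
    obtain ⟨W, hWc, hWr⟩ := exists_subspace_lt hAB E
    set W1 : Submodule ℂ (EuclideanSpace ℂ n) := W.map (TT S) with hW1def
    set W2 : Submodule ℂ (EuclideanSpace ℂ n) := W1.map (TT Y) with hW2def
    have hW1c : ∀ y ∈ W1, y ≠ 0 → (⟪y, y⟫).re < (⟪TT Y y, TT Y y⟫).re := by
      intro y hy hy0
      obtain ⟨x, hxW, rfl⟩ := Submodule.mem_map.mp hy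
      have hx0 : x ≠ 0 := fun h => hy0 (by rw [h, map_zero])
      exact (hcond x).mp (hWc x hxW hx0)
    have hW2c : ∀ z ∈ W2, z ≠ 0 →
        1 * (⟪z, z⟫).re < (⟪z, TT (R * (A - E • (1 : Matrix n n ℂ))⁻¹ * R) z⟫).re := by
      intro z hz hz0
      obtain ⟨y, hyW1, rfl⟩ := Submodule.mem_map.mp hz
      have hy0 : y ≠ 0 := fun h => hz0 (by rw [h, map_zero])
      have hcs := cs_step Y y (hW1c y hyW1 hy0)
      rw [one_mul, hKz]
      exact hcs
    have hr2 : finrank ℂ W2 = (Finset.univ.filter fun i => hAB.eigenvalues i < E).card := by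
      rw [hW2def, finrank_map_eq' (TT Y) W1 ?inj2, hW1def,
        finrank_map_eq' (TT S) W (fun x _ h => hTSinj x h), hWr]
      case inj2 =>
        intro y hy h0
        by_contra hy0
        have := hW1c y hy hy0
        rw [h0] at this
        simp only [inner_zero_left, Complex.zero_re] at this
        linarith [inner_re_nonneg y]
    calc (Finset.univ.filter fun i => hAB.eigenvalues i < E).card
        = finrank ℂ W2 := hr2.symm
      _ ≤ (Finset.univ.filter fun i => 1 < hK.eigenvalues i).card :=
          card_ge_of_gt hK 1 W2 hW2c
  -- direction 2 : RHS ≤ LHS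
  have hle2 : (Finset.univ.filter fun i => 1 < hK.eigenvalues i).card
      ≤ (Finset.univ.filter fun i => hAB.eigenvalues i < E).card := by
    obtain ⟨W, hWc, hWr⟩ := exists_subspace_gt hK 1
    set W1 : Submodule ℂ (EuclideanSpace ℂ n) := W.map (TT Yᴴ) with hW1def
    set W2 : Submodule ℂ (EuclideanSpace ℂ n) := W1.map (TT S⁻¹) with hW2def
    have hWc' : ∀ z ∈ W, z ≠ 0 → (⟪z, z⟫).re < (⟪TT Yᴴ z, TT Yᴴ z⟫).re := by
      intro z hz hz0
      have h1 := hWc z hz hz0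
      rw [one_mul, hKz z] at h1
      exact h1
    have hW1c : ∀ y ∈ W1, y ≠ 0 → (⟪y, y⟫).re < (⟪TT Y y, TT Y y⟫).re := by
      intro y hy hy0
      obtain ⟨z, hzW, rfl⟩ := Submodule.mem_map.mp hy
      have hz0 : z ≠ 0 := fun h => hy0 (by rw [h, map_zero])
      have hcs := cs_step Yᴴ z (hWc' z hzW hz0)
      rwa [Matrix.conjTranspose_conjTranspose] at hcs
    have hW2c : ∀ x ∈ W2, x ≠ 0 → (⟪x, TT (A - B) x⟫).re < E * (⟪x, x⟫).re := by
      intro x hx hx0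
      obtain ⟨y, hyW1, rfl⟩ := Submodule.mem_map.mp hx
      have hy0 : y ≠ 0 := fun h => hx0 (by rw [h, map_zero])
      apply (hcond _).mpr
      have hSx : TT S (TT S⁻¹ y) = y := by rw [← TT_mul, hS2, TT_one]
      rw [hSx]
      exact hW1c y hyW1 hy0
    have hr2 : finrank ℂ W2 = (Finset.univ.filter fun i => 1 < hK.eigenvalues i).card := by
      rw [hW2def, finrank_map_eq' (TT S⁻¹) W1 (fun x _ h => hTSinvinj x h), hW1def,
        finrank_map_eq' (TT Yᴴ) W ?inj1, hWr]
      case inj1 =>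
        intro z hz h0
        by_contra hz0
        have := hWc' z hz hz0
        rw [h0] at this
        simp only [inner_zero_left, Complex.zero_re] at this
        linarith [inner_re_nonneg z]
    calc (Finset.univ.filter fun i => 1 < hK.eigenvalues i).card
        = finrank ℂ W2 := hr2.symm
      _ ≤ (Finset.univ.filter fun i => hAB.eigenvalues i < E).card :=
          card_ge_of_lt hAB E W2 hW2c
  exact le_antisymm hle1 hle2
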